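/- arXiv:1907.09857 — 6 statements merged into one kernel-verified Lean document; each statement's English description precedes it below -/
import Mathlib

section
/- For every α > 0, λ > 0 and every z ∈ ℝ, the characteristic function of the Gamma distribution Γ(α,λ) satisfies φ(z) = (λ/(λ − iz))^α, where the complex power is the principal branch (note that λ/(λ − iz) has positive real part, so the principal power is well defined). -/
open MeasureTheory ProbabilityTheory Set Complex Filter Metric

lemma aux_real_integrable (a : ℝ) (ha : 0 < a) {c : ℝ} (hc : 0 < c) :
    IntegrableOn (fun t : ℝ ↦ t ^ (a - 1) * Real.exp (-(c * t))) (Ioi 0) := by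
  have := integrableOn_rpow_mul_exp_neg_mul_rpow (p := 1) (s := a - 1) (b := c)
    (by linarith) one_pos hc
  simpa [Real.rpow_one, neg_mul] using this

lemma aux_contOn (w : ℂ) : ContinuousOn (fun t : ℝ ↦ (t : ℂ) ^ w) (Ioi (0:ℝ)) := by
  apply ContinuousOn.cpow_const (Complex.continuous_ofReal.continuousOn)
  intro t ht
  exact Or.inl (by simpa using ht)

lemma aux_norm {a : ℝ} {s : ℂ} {t : ℝ} (ht : 0 < t) :
    ‖(t : ℂ) ^ ((a : ℂ) - 1) * Complex.exp (-(s * t))‖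
      = t ^ (a - 1) * Real.exp (-(s.re * t)) := by
  rw [norm_mul, Complex.norm_exp,
    Complex.norm_cpow_eq_rpow_re_of_pos ht]
  simp [Complex.mul_re]

lemma aux_cintegrable (a : ℝ) (ha : 0 < a) {s : ℂ} (hs : 0 < s.re) :
    IntegrableOn (fun t : ℝ ↦ (t : ℂ) ^ ((a : ℂ) - 1) * Complex.exp (-(s * t))) (Ioi 0) := by
  refine (aux_real_integrable a ha hs).mono' ?_ ?_
  · exact ((aux_contOn _).mul (Complex.continuous_exp.comp
      (by fun_prop)).continuousOn).aestronglyMeasurable measurableSet_Ioi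
  · filter_upwards [ae_restrict_mem measurableSet_Ioi] with t ht
    rw [aux_norm ht]

lemma aux_hasDerivAt (a : ℝ) (ha : 0 < a) {s₀ : ℂ} (hs₀ : 0 < s₀.re) :
    DifferentiableAt ℂ
      (fun s : ℂ ↦ ∫ t : ℝ in Ioi 0, (t : ℂ) ^ ((a : ℂ) - 1) * Complex.exp (-(s * t))) s₀ := by
  set ε := s₀.re / 2 with hε
  have hεpos : 0 < ε := by positivity
  have key := hasDerivAt_integral_of_dominated_loc_of_deriv_le (μ := volume.restrict (Ioi 0))
    (F := fun (s : ℂ) (t : ℝ) ↦ (t : ℂ) ^ ((a : ℂ) - 1) * Complex.exp (-(s * t)))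
    (F' := fun (s : ℂ) (t : ℝ) ↦ (t : ℂ) ^ ((a : ℂ) - 1) * (Complex.exp (-(s * t)) * (-t)))
    (x₀ := s₀) (bound := fun t : ℝ ↦ t ^ a * Real.exp (-(ε * t))) (s := ball s₀ ε) (ball_mem_nhds s₀ hεpos) ?_ ?_ ?_ ?_ ?_ ?_
  · exact key.2.differentiableAt
  · filter_upwards with x
    exact ((aux_contOn _).mul (Complex.continuous_exp.comp
      (by fun_prop)).continuousOn).aestronglyMeasurable measurableSet_Ioi
  · exact aux_cintegrable a ha hs₀
  · exact ((aux_contOn _).mul ((Complex.continuous_exp.comp (by fun_prop)).continuousOn.mul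
      (by fun_prop))).aestronglyMeasurable measurableSet_Ioi
  · filter_upwards [ae_restrict_mem measurableSet_Ioi] with t ht x hx
    have hxre : ε ≤ x.re := by
      have : |(x - s₀).re| ≤ ‖x - s₀‖ := Complex.abs_re_le_norm _
      have h2 : ‖x - s₀‖ < ε := by simpa [dist_eq_norm] using hx
      have := abs_lt.mp (lt_of_le_of_lt this h2)
      simp only [Complex.sub_re] at this
      linarith [this.1]
    have htp : (0:ℝ) < t := mem_Ioi.mp ht
    have h1 : ‖(t : ℂ) ^ ((a : ℂ) - 1) * (Complex.exp (-(x * t)) * (-t : ℂ))‖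
        = t ^ (a - 1) * Real.exp (-(x.re * t)) * t := by
      rw [show ((t:ℂ) ^ ((a:ℂ)-1) : ℂ) * (Complex.exp (-(x * t)) * (-t : ℂ))
        = ((t:ℂ) ^ ((a:ℂ)-1) * Complex.exp (-(x * t))) * (-t : ℂ) by ring]
      rw [norm_mul, aux_norm htp]
      simp [abs_of_pos htp]
    rw [h1]
    have ht' : t ^ (a - 1) * t = t ^ a := by
      rw [show a = (a - 1) + 1 by ring, Real.rpow_add_one htp.ne']
      ring_nf
    calc t ^ (a - 1) * Real.exp (-(x.re * t)) * t
        = t ^ a * Real.exp (-(x.re * t)) := by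
          rw [show t ^ (a-1) * Real.exp (-(x.re * t)) * t
            = (t ^ (a-1) * t) * Real.exp (-(x.re * t)) by ring, ht']
      _ ≤ t ^ a * Real.exp (-(ε * t)) := by
          apply mul_le_mul_of_nonneg_left _ (Real.rpow_nonneg htp.le a)
          exact Real.exp_le_exp.mpr (by nlinarith [htp.le, hxre])
  · have := aux_real_integrable (a + 1) (by linarith) hεpos
    exact (by simpa using this : IntegrableOn (fun t : ℝ ↦ t ^ a * Real.exp (-(ε * t))) (Ioi 0))
  · filter_upwards [ae_restrict_mem measurableSet_Ioi] with t ht x hx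
    have h : HasDerivAt (fun s : ℂ ↦ -(s * t)) (-t : ℂ) x := by
      simpa using ((hasDerivAt_id x).mul_const (t : ℂ)).fun_neg
    exact (h.cexp).const_mul _

lemma aux_integral (a : ℝ) (ha : 0 < a) {s : ℂ} (hs : 0 < s.re) :
    ∫ t : ℝ in Ioi 0, (t : ℂ) ^ ((a : ℂ) - 1) * Complex.exp (-(s * t))
      = (1 / s) ^ (a : ℂ) * Complex.Gamma a := by
  set F : ℂ → ℂ := fun s ↦ ∫ t : ℝ in Ioi 0, (t : ℂ) ^ ((a : ℂ) - 1) * Complex.exp (-(s * t))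
    with hFdef
  set G : ℂ → ℂ := fun s ↦ (1 / s) ^ (a : ℂ) * Complex.Gamma a with hGdef
  set U : Set ℂ := {s | 0 < s.re} with hUdef
  have hUo : IsOpen U := isOpen_lt continuous_const Complex.continuous_re
  have hUc : IsPreconnected U := (convex_halfSpace_re_gt 0).isPreconnected
  have hF : AnalyticOnNhd ℂ F U := by
    refine DifferentiableOn.analyticOnNhd (fun x hx ↦ ?_) hUo
    exact (aux_hasDerivAt a ha hx).differentiableWithinAt
  have hG : AnalyticOnNhd ℂ G U := by
    refine DifferentiableOn.analyticOnNhd (fun x hx ↦ DifferentiableAt.differentiableWithinAt ?_) hUo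
    have hx : 0 < x.re := hx
    have hx0 : x ≠ 0 := fun h ↦ by simp [h] at hx
    refine (((differentiableAt_const 1).div differentiableAt_id hx0).cpow
      (differentiableAt_const _) ?_).mul_const _
    refine Or.inl ?_
    simpa [one_div, Complex.inv_re] using div_pos hx (Complex.normSq_pos.mpr hx0)
  have h1 : (1:ℂ) ∈ U := by simp [hUdef]
  have freq : ∃ᶠ z in nhdsWithin 1 {(1:ℂ)}ᶜ, F z = G z := by
    have htend : Filter.Tendsto (fun n : ℕ ↦ ((1 + ((n:ℝ)+1)⁻¹ : ℝ) : ℂ)) Filter.atTop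
        (nhdsWithin 1 {(1:ℂ)}ᶜ) := by
      rw [tendsto_nhdsWithin_iff]
      constructor
      · have : Filter.Tendsto (fun n : ℕ ↦ (1 + ((n:ℝ)+1)⁻¹ : ℝ)) Filter.atTop (nhds 1) := by
          have := tendsto_one_div_add_atTop_nhds_zero_nat (𝕜 := ℝ)
          have h := (tendsto_const_nhds (x := (1:ℝ))).add (by simpa [one_div] using this :
            Filter.Tendsto (fun n : ℕ ↦ ((n:ℝ)+1)⁻¹) Filter.atTop (nhds 0))
          simpa using h
        have h2 := (Complex.continuous_ofReal.tendsto 1).comp this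
        exact h2
      · filter_upwards with n
        simp only [Set.mem_compl_iff, Set.mem_singleton_iff]
        intro h
        have : (1 + ((n:ℝ)+1)⁻¹ : ℝ) = 1 := by exact_mod_cast h
        have hpos : (0:ℝ) < ((n:ℝ)+1)⁻¹ := by positivity
        linarith
    refine htend.frequently (Filter.Frequently.of_forall fun n ↦ ?_)
    have hr : (0:ℝ) < 1 + ((n:ℝ)+1)⁻¹ := by positivity
    have := Complex.integral_cpow_mul_exp_neg_mul_Ioi (a := (a:ℂ)) (r := 1 + ((n:ℝ)+1)⁻¹)
      (by simpa using ha) hr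
    simp only [hFdef, hGdef]
    exact this
  have := hF.eqOn_of_preconnected_of_frequently_eq hG hUc h1 freq
  exact this hs

lemma aux_mul_cpow {a : ℝ} (ha : 0 < a) {w : ℂ} (hw : w ≠ 0) (r : ℂ) :
    ((a : ℂ) * w) ^ r = (a : ℂ) ^ r * w ^ r := by
  rw [Complex.cpow_def_of_ne_zero (mul_ne_zero (Complex.ofReal_ne_zero.mpr ha.ne') hw),
    Complex.log_ofReal_mul ha hw, Complex.cpow_def_of_ne_zero (Complex.ofReal_ne_zero.mpr ha.ne'),
    Complex.cpow_def_of_ne_zero hw, ← Complex.exp_add, ← Complex.ofReal_log ha.le, add_mul]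

/-- For every `α > 0`, `λ > 0` and `z : ℝ`, the characteristic function of the
Gamma distribution `Γ(α,λ)` satisfies `φ(z) = (λ/(λ − iz))^α` (principal branch power). -/
theorem gamma_charFun (α lam : ℝ) (hα : 0 < α) (hlam : 0 < lam) (z : ℝ) :
    ∫ x, Complex.exp (Complex.I * z * x) ∂(gammaMeasure α lam)
      = ((lam : ℂ) / (lam - Complex.I * z)) ^ (α : ℂ) := by
  set s : ℂ := (lam : ℂ) - Complex.I * z with hsdef
  have hs : 0 < s.re := by simp [hsdef, Complex.mul_re, hlam]
  have hs0 : s ≠ 0 := fun h ↦ by rw [h] at hs; simp at hs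
  have hΓ : (0:ℝ) < Real.Gamma α := Real.Gamma_pos_of_pos hα
  have hmeas : Measurable fun x ↦ (gammaPDFReal α lam x).toNNReal :=
    (measurable_gammaPDFReal α lam).real_toNNReal
  have hwd : gammaMeasure α lam
      = volume.withDensity (fun x ↦ ((gammaPDFReal α lam x).toNNReal : ENNReal)) := rfl
  rw [hwd, integral_withDensity_eq_integral_smul hmeas]
  have hcompl : ∀ᵐ x : ℝ, x ∉ Ioi (0:ℝ) →
      (gammaPDFReal α lam x).toNNReal • Complex.exp (Complex.I * z * x) = 0 := by
    have h0 : (volume : Measure ℝ) ({0} : Set ℝ) = 0 := measure_singleton 0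
    rw [ae_iff]
    refine measure_mono_null (fun x hx ↦ ?_) h0
    simp only [Set.mem_setOf_eq, not_forall] at hx
    obtain ⟨hx1, hx2⟩ := hx
    simp only [Set.mem_singleton_iff]
    by_contra hne
    have hxlt : x < 0 := lt_of_le_of_ne (not_lt.mp (fun h ↦ hx1 h)) hne
    apply hx2
    rw [gammaPDFReal, if_neg (not_le.mpr hxlt)]
    simp
  rw [← setIntegral_eq_integral_of_ae_compl_eq_zero hcompl]
  have hcong : ∀ x ∈ Ioi (0:ℝ),
      (gammaPDFReal α lam x).toNNReal • Complex.exp (Complex.I * z * x)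
        = ((lam ^ α / Real.Gamma α : ℝ) : ℂ)
            * ((x : ℂ) ^ ((α : ℂ) - 1) * Complex.exp (-(s * x))) := by
    intro x hx
    have hx : (0:ℝ) < x := hx
    have hnn : 0 ≤ gammaPDFReal α lam x := gammaPDFReal_nonneg hα hlam x
    rw [NNReal.smul_def, Real.coe_toNNReal _ hnn, Complex.real_smul, gammaPDFReal,
      if_pos hx.le]
    have h1 : ((x ^ (α - 1) : ℝ) : ℂ) = (x : ℂ) ^ ((α : ℂ) - 1) := by
      rw [Complex.ofReal_cpow hx.le]
      push_cast
      ring_nf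
    have h2 : ((Real.exp (-(lam * x)) : ℝ) : ℂ) * Complex.exp (Complex.I * z * x)
        = Complex.exp (-(s * x)) := by
      rw [Complex.ofReal_exp, ← Complex.exp_add]
      congr 1
      rw [hsdef]
      push_cast
      ring
    rw [Complex.ofReal_mul, Complex.ofReal_mul, h1, mul_assoc, mul_assoc, h2]
  rw [setIntegral_congr_fun measurableSet_Ioi hcong, integral_const_mul,
    aux_integral α hα hs, Complex.Gamma_ofReal]
  have hΓ' : ((Real.Gamma α : ℝ) : ℂ) ≠ 0 := Complex.ofReal_ne_zero.mpr hΓ.ne'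
  have key : ((lam ^ α / Real.Gamma α : ℝ) : ℂ) * ((1 / s) ^ (α:ℂ) * (Real.Gamma α : ℂ))
      = ((lam ^ α : ℝ) : ℂ) * (1 / s) ^ (α:ℂ) := by
    push_cast
    calc ((lam ^ α : ℝ) : ℂ) / (Real.Gamma α : ℂ) * ((1 / s) ^ (α:ℂ) * (Real.Gamma α : ℂ))
        = ((lam ^ α : ℝ) : ℂ) * (1 / s) ^ (α:ℂ) * ((Real.Gamma α : ℂ) / (Real.Gamma α : ℂ)) := by
          ring
      _ = ((lam ^ α : ℝ) : ℂ) * (1 / s) ^ (α:ℂ) := by rw [div_self hΓ', mul_one]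
  rw [key, Complex.ofReal_cpow hlam.le, ← aux_mul_cpow hlam (one_div_ne_zero hs0)]
  rw [mul_one_div]
end

section
/- For all α⁺, λ⁺, α⁻, λ⁻ > 0 and every z ∈ ℝ, the characteristic function of the bilateral Gamma distribution Γ(α⁺,λ⁺;α⁻,λ⁻) satisfies φ(z) = (λ⁺/(λ⁺ − iz))^{α⁺} · (λ⁻/(λ⁻ + iz))^{α⁻}, where the complex powers are the principal branch. -/
open MeasureTheory ProbabilityTheory


open MeasureTheory ProbabilityTheory Set Complex
open scoped ENNReal NNReal

namespace BilateralGammaAux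

lemma re_aux (l z t : ℝ) : ((Complex.I * z - l) * t).re = -(l * t) := by
  simp [Complex.mul_re]

lemma norm_integrand (s l z t : ℝ) :
    ‖((t ^ s : ℝ) : ℂ) * Complex.exp ((Complex.I * z - l) * t)‖
      = |t ^ s| * Real.exp (-(l * t)) := by
  rw [norm_mul, Complex.norm_real, Complex.norm_exp, re_aux]
  rfl

lemma aesm_rpow (s : ℝ) :
    AEStronglyMeasurable (fun t : ℝ => ((t ^ s : ℝ) : ℂ)) (volume.restrict (Ioi 0)) := by
  have h : Measurable fun t : ℝ => ((Real.exp (Real.log t * s) : ℝ) : ℂ) :=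
    Complex.measurable_ofReal.comp ((Real.measurable_log.mul measurable_const).exp)
  refine h.aestronglyMeasurable.congr ?_
  filter_upwards [ae_restrict_mem measurableSet_Ioi] with t ht
  rw [Real.rpow_def_of_pos ht]

lemma cont_cexp (l z : ℝ) :
    Continuous (fun t : ℝ => Complex.exp ((Complex.I * z - l) * t)) :=
  Complex.continuous_exp.comp (continuous_const.mul Complex.continuous_ofReal)

lemma integrable_real (s l : ℝ) (hs : -1 < s) (hl : 0 < l) :
    IntegrableOn (fun t : ℝ => t ^ s * Real.exp (-(l * t))) (Ioi 0) := by
  have := integrableOn_rpow_mul_exp_neg_mul_rpow hs zero_lt_one hl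
  simpa [Real.rpow_one, neg_mul] using this

lemma integrable_cexp (s l : ℝ) (hs : -1 < s) (hl : 0 < l) (z : ℝ) :
    IntegrableOn (fun t : ℝ => ((t ^ s : ℝ) : ℂ) * Complex.exp ((Complex.I * z - l) * t))
      (Ioi 0) := by
  refine Integrable.mono' (integrable_real s l hs hl)
    ((aesm_rpow s).mul (cont_cexp l z).aestronglyMeasurable) ?_
  filter_upwards [ae_restrict_mem measurableSet_Ioi] with t ht
  rw [norm_integrand, _root_.abs_of_nonneg (Real.rpow_nonneg (le_of_lt ht) _)]

/-- The basic one-sided integral. -/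
noncomputable def Fi (a l z : ℝ) : ℂ :=
  ∫ t in Ioi (0:ℝ), ((t ^ (a - 1) : ℝ) : ℂ) * Complex.exp ((Complex.I * z - l) * t)

noncomputable def Gi (a l z : ℝ) : ℂ :=
  ∫ t in Ioi (0:ℝ), ((t ^ a : ℝ) : ℂ) * Complex.exp ((Complex.I * z - l) * t)

lemma byparts {a l : ℝ} (ha : 0 < a) (hl : 0 < l) (z : ℝ) :
    (a : ℂ) * Fi a l z + (Complex.I * z - l) * Gi a l z = 0 := by
  set w : ℂ := Complex.I * z - l with hw
  have i1 : IntegrableOn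
      (fun t : ℝ => (a:ℂ) * (((t ^ (a-1) : ℝ) : ℂ) * Complex.exp (w * t))) (Ioi 0) :=
    (integrable_cexp (a-1) l (by linarith) hl z).const_mul _
  have i2 : IntegrableOn
      (fun t : ℝ => w * (((t ^ a : ℝ) : ℂ) * Complex.exp (w * t))) (Ioi 0) :=
    (integrable_cexp a l (by linarith) hl z).const_mul _
  have key : (∫ t in Ioi (0:ℝ),
      ((a:ℂ) * (((t ^ (a-1) : ℝ) : ℂ) * Complex.exp (w * t))
        + w * (((t ^ a : ℝ) : ℂ) * Complex.exp (w * t))))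
      = 0 - ((((0:ℝ) ^ a : ℝ) : ℂ) * Complex.exp (w * 0)) := by
    refine integral_Ioi_of_hasDerivAt_of_tendsto
      (f := fun t : ℝ => ((t ^ a : ℝ) : ℂ) * Complex.exp (w * t))
      (f' := fun t : ℝ => (a:ℂ) * (((t ^ (a-1) : ℝ) : ℂ) * Complex.exp (w * t))
        + w * (((t ^ a : ℝ) : ℂ) * Complex.exp (w * t)))
      ?_ ?_ (i1.add i2) ?_
    · refine ContinuousWithinAt.mul ?_ (cont_cexp l z).continuousWithinAt
      exact (Complex.continuous_ofReal.continuousAt.comp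
        (Real.continuousAt_rpow_const 0 a (Or.inr ha.le))).continuousWithinAt
    · intro t ht
      have ht' : (0:ℝ) < t := ht
      have h1 : HasDerivAt (fun t : ℝ => ((t ^ a : ℝ) : ℂ)) ((a * t ^ (a-1) : ℝ) : ℂ) t :=
        (Real.hasDerivAt_rpow_const (Or.inl ht'.ne')).ofReal_comp
      have h2 : HasDerivAt (fun t : ℝ => Complex.exp (w * t))
          (w * Complex.exp (w * t)) t := by
        have h0 := (((hasDerivAt_id ((t:ℝ):ℂ)).const_mul w).cexp).comp_ofReal (z := t)
        simpa [mul_comm] using h0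
      have := h1.mul h2
      convert this using 1
      · rfl
      · rfl
      rw [Complex.ofReal_mul]
      ring
    · refine squeeze_zero_norm' (a := fun t : ℝ => t ^ a * Real.exp (-(l * t))) ?_ ?_
      · filter_upwards [Filter.Ioi_mem_atTop (0:ℝ)] with t ht
        rw [norm_integrand, _root_.abs_of_nonneg (Real.rpow_nonneg (le_of_lt ht) _)]
      · have := tendsto_rpow_mul_exp_neg_mul_atTop_nhds_zero a l hl
        simpa [neg_mul] using this
  rw [integral_add i1 i2, integral_const_mul, integral_const_mul] at key
  rw [Real.zero_rpow ha.ne'] at key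
  simpa [Fi, Gi] using key

lemma rpow_succ {a t : ℝ} (ht : (0:ℝ) < t) : t ^ (a - 1) * t = t ^ a := by
  calc t ^ (a-1) * t = t ^ (a-1) * t ^ (1:ℝ) := by rw [Real.rpow_one]
    _ = t ^ (a-1+1) := (Real.rpow_add ht _ _).symm
    _ = t ^ a := by ring_nf

lemma hasDerivAt_Fi {a l : ℝ} (ha : 0 < a) (hl : 0 < l) (z : ℝ) :
    HasDerivAt (Fi a l) (Complex.I * Gi a l z) z := by
  have main := hasDerivAt_integral_of_dominated_loc_of_deriv_le
    (μ := volume.restrict (Ioi (0:ℝ)))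
    (F := fun (x : ℝ) (t : ℝ) => ((t ^ (a-1) : ℝ) : ℂ) * Complex.exp ((Complex.I * x - l) * t))
    (F' := fun (x : ℝ) (t : ℝ) =>
      ((t ^ (a-1) : ℝ) : ℂ) * (Complex.exp ((Complex.I * x - l) * t) * (Complex.I * t)))
    (x₀ := z) (bound := fun t : ℝ => t ^ a * Real.exp (-(l * t))) (s := Set.univ) Filter.univ_mem
    ?_ ?_ ?_ ?_ ?_ ?_
  · have heq : (∫ t in Ioi (0:ℝ),
        ((t ^ (a-1) : ℝ) : ℂ) * (Complex.exp ((Complex.I * z - l) * t) * (Complex.I * t)))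
        = Complex.I * Gi a l z := by
      rw [Gi, ← integral_const_mul]
      refine setIntegral_congr_fun measurableSet_Ioi (fun t ht => ?_)
      have h1 := rpow_succ (a := a) (t := t) ht
      have h2 : ((t ^ a : ℝ) : ℂ) = ((t ^ (a-1) : ℝ) : ℂ) * (t : ℂ) := by
        rw [← h1]; push_cast; ring
      rw [h2]; ring
    rw [heq] at main
    exact main.2
  · filter_upwards with x
    exact (aesm_rpow (a-1)).mul (cont_cexp l x).aestronglyMeasurable
  · exact integrable_cexp (a-1) l (by linarith) hl z
  · exact (aesm_rpow (a-1)).mul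
      ((cont_cexp l z).mul ((continuous_const.mul Complex.continuous_ofReal))).aestronglyMeasurable
  · filter_upwards [ae_restrict_mem measurableSet_Ioi] with t ht x _
    have ht' : (0:ℝ) < t := ht
    rw [norm_mul, norm_mul, norm_mul, Complex.norm_real, Complex.norm_real,
      Complex.norm_exp]
    have hre : ((Complex.I * x - l) * t).re = -(l * t) := re_aux l x t
    rw [hre, Complex.norm_I, one_mul,
      Real.norm_eq_abs, Real.norm_eq_abs,
      _root_.abs_of_nonneg (Real.rpow_nonneg ht'.le _), _root_.abs_of_nonneg ht'.le]
    rw [show t ^ (a-1) * (Real.exp (-(l*t)) * t) = (t ^ (a-1) * t) * Real.exp (-(l*t)) by ring,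
      rpow_succ ht']
  · exact integrable_real a l (by linarith) hl
  · filter_upwards with t x _
    have h0 : HasDerivAt (fun w : ℂ => Complex.exp ((Complex.I * w - l) * t))
        (Complex.exp ((Complex.I * (x:ℂ) - l) * t) * (Complex.I * 1 * t)) (x:ℂ) :=
      ((((hasDerivAt_id ((x:ℝ):ℂ)).const_mul Complex.I).sub_const ((l:ℝ):ℂ)).mul_const
        ((t:ℝ):ℂ)).cexp
    have h1 := (h0.comp_ofReal).const_mul ((t ^ (a-1) : ℝ) : ℂ)
    simpa [mul_one] using h1

lemma hne_aux {l : ℝ} (hl : 0 < l) (y : ℝ) : ((l:ℂ) - Complex.I * y) ≠ 0 := by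
  intro h
  have hre : ((l:ℂ) - Complex.I * y).re = l := by simp [Complex.mul_re]
  rw [h] at hre
  simp at hre
  linarith

lemma Fi_mul_cpow_const {a l : ℝ} (ha : 0 < a) (hl : 0 < l) (z : ℝ) :
    Fi a l z * ((l : ℂ) - Complex.I * z) ^ (a:ℂ)
      = Fi a l 0 * ((l : ℂ) - Complex.I * (0:ℝ)) ^ (a:ℂ) := by
  have hH : ∀ y : ℝ,
      HasDerivAt (fun y : ℝ => Fi a l y * ((l:ℂ) - Complex.I * y) ^ (a:ℂ)) 0 y := by
    intro y
    have h1 := hasDerivAt_Fi ha hl y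
    have h2 : HasDerivAt (fun y : ℝ => ((l:ℂ) - Complex.I * y) ^ (a:ℂ))
        ((a:ℂ) * ((l:ℂ) - Complex.I * y) ^ ((a:ℂ)-1) * (-(Complex.I * 1))) y := by
      have h0 : HasDerivAt (fun w : ℂ => ((l:ℂ) - Complex.I * w) ^ (a:ℂ))
          ((a:ℂ) * ((l:ℂ) - Complex.I * y) ^ ((a:ℂ)-1) * (-(Complex.I * 1))) ((y:ℝ):ℂ) := by
        refine HasDerivAt.cpow_const ?_ ?_
        · exact ((hasDerivAt_id _).const_mul Complex.I).const_sub ((l:ℝ):ℂ)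
        · left
          simp [Complex.mul_re]
          exact hl
      exact h0.comp_ofReal
    have h3 := h1.mul h2
    have hP : ((l:ℂ) - Complex.I*y) ^ ((a:ℂ)-1) * ((l:ℂ) - Complex.I*y)
        = ((l:ℂ) - Complex.I*y) ^ (a:ℂ) := by
      calc ((l:ℂ) - Complex.I*y) ^ ((a:ℂ)-1) * ((l:ℂ) - Complex.I*y)
          = ((l:ℂ) - Complex.I*y) ^ ((a:ℂ)-1) * ((l:ℂ) - Complex.I*y) ^ (1:ℂ) := by
            rw [Complex.cpow_one]
        _ = ((l:ℂ) - Complex.I*y) ^ ((a:ℂ)-1+1) := (Complex.cpow_add _ _ (hne_aux hl y)).symm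
        _ = ((l:ℂ) - Complex.I*y) ^ (a:ℂ) := by ring_nf
    have key2 : ((l:ℂ) - Complex.I*y) * Gi a l y = (a:ℂ) * Fi a l y := by
      linear_combination (-1 : ℂ) * byparts ha hl y
    have hzero : (Complex.I * Gi a l y) * (((l:ℂ) - Complex.I*y) ^ (a:ℂ))
        + Fi a l y * ((a:ℂ) * ((l:ℂ) - Complex.I*y) ^ ((a:ℂ)-1) * (-(Complex.I * 1))) = 0 := by
      rw [← hP]
      linear_combination (Complex.I * ((l:ℂ) - Complex.I*y) ^ ((a:ℂ)-1)) * key2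
    exact hzero ▸ h3
  exact is_const_of_deriv_eq_zero (fun y => (hH y).differentiableAt)
    (fun y => (hH y).deriv) z 0

lemma Fi_zero {a l : ℝ} (ha : 0 < a) (hl : 0 < l) :
    Fi a l 0 = (((1/l) ^ a * Real.Gamma a : ℝ) : ℂ) := by
  rw [Fi]
  have hcongr : ∀ t ∈ Ioi (0:ℝ),
      ((t ^ (a-1) : ℝ) : ℂ) * Complex.exp ((Complex.I * ((0:ℝ):ℂ) - l) * t)
        = ((t ^ (a-1) * Real.exp (-(l * t)) : ℝ) : ℂ) := by
    intro t ht
    rw [show (Complex.I * ((0:ℝ):ℂ) - (l:ℂ)) * t = ((-(l*t) : ℝ) : ℂ) by push_cast; ring,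
      ← Complex.ofReal_exp, ← Complex.ofReal_mul]
  rw [setIntegral_congr_fun measurableSet_Ioi hcongr,
    show (∫ t in Ioi (0:ℝ), ((t ^ (a-1) * Real.exp (-(l*t)) : ℝ) : ℂ))
      = (((∫ t in Ioi (0:ℝ), t ^ (a-1) * Real.exp (-(l*t))) : ℝ) : ℂ) from integral_ofReal,
    Real.integral_rpow_mul_exp_neg_mul_Ioi ha hl]

lemma ofReal_mul_cpow {r : ℝ} (hr : 0 < r) {w : ℂ} (hw : w ≠ 0) (s : ℂ) :
    ((r : ℂ) * w) ^ s = (r : ℂ) ^ s * w ^ s := by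
  have hr' : (r:ℂ) ≠ 0 := Complex.ofReal_ne_zero.mpr hr.ne'
  rw [Complex.cpow_def_of_ne_zero (mul_ne_zero hr' hw), Complex.log_ofReal_mul hr hw,
    Complex.ofReal_log hr.le, add_mul, Complex.exp_add,
    ← Complex.cpow_def_of_ne_zero hr', ← Complex.cpow_def_of_ne_zero hw]

theorem charFun_gamma (a l : ℝ) (ha : 0 < a) (hl : 0 < l) (z : ℝ) :
    ∫ x, Complex.exp (Complex.I * z * x) ∂(gammaMeasure a l)
      = ((l : ℂ) / ((l:ℂ) - Complex.I * z)) ^ (a : ℂ) := by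
  have hne : ((l:ℂ) - Complex.I * z) ≠ 0 := hne_aux hl z
  -- step 1: reduce to Fi
  have h1 : ∫ x, Complex.exp (Complex.I * z * x) ∂(gammaMeasure a l)
      = ((l ^ a / Real.Gamma a : ℝ) : ℂ) * Fi a l z := by
    rw [gammaMeasure,
      show gammaPDF a l = fun x => ((Real.toNNReal (gammaPDFReal a l x) : ℝ≥0) : ℝ≥0∞) from rfl,
      integral_withDensity_eq_integral_smul (measurable_gammaPDFReal a l).real_toNNReal _]
    have hsmul : ∀ x : ℝ, (Real.toNNReal (gammaPDFReal a l x) : ℝ≥0) •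
          Complex.exp (Complex.I * z * x)
        = ((gammaPDFReal a l x : ℝ) : ℂ) * Complex.exp (Complex.I * z * x) := by
      intro x
      rw [NNReal.smul_def, Real.coe_toNNReal _ (gammaPDFReal_nonneg ha hl x),
        Complex.real_smul]
    rw [show (fun x : ℝ => (Real.toNNReal (gammaPDFReal a l x) : ℝ≥0) •
          Complex.exp (Complex.I * z * x))
        = fun x : ℝ => ((gammaPDFReal a l x : ℝ) : ℂ) * Complex.exp (Complex.I * z * x)
        from funext hsmul]
    rw [← setIntegral_eq_integral_of_forall_compl_eq_zero (s := Ici (0:ℝ)) (fun x hx => by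
      rw [show gammaPDFReal a l x = 0 from if_neg (by simpa using hx)]
      simp)]
    rw [integral_Ici_eq_integral_Ioi, Fi, ← integral_const_mul]
    refine setIntegral_congr_fun measurableSet_Ioi (fun x hx => ?_)
    have hx' : (0:ℝ) < x := hx
    rw [gammaPDFReal, if_pos hx'.le]
    have he : Complex.exp ((Complex.I * z - l) * x)
        = ((Real.exp (-(l*x)) : ℝ):ℂ) * Complex.exp (Complex.I*z*x) := by
      rw [Complex.ofReal_exp, ← Complex.exp_add]
      congr 1
      push_cast
      ring
    rw [he]
    push_cast
    ring
  have h2 := Fi_mul_cpow_const ha hl z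
  rw [Fi_zero ha hl] at h2
  have hP0 : ((l : ℂ) - Complex.I * ((0:ℝ):ℂ)) ^ (a:ℂ) = (l:ℂ) ^ (a:ℂ) := by norm_num
  rw [hP0] at h2
  have hPne : ((l:ℂ) - Complex.I * z) ^ (a:ℂ) ≠ 0 := by
    intro h
    rcases (Complex.cpow_eq_zero_iff _ _).mp h with ⟨h', _⟩
    exact hne h'
  have hFi : Fi a l z = (((1/l) ^ a * Real.Gamma a : ℝ) : ℂ) * (l:ℂ) ^ (a:ℂ)
      * (((l:ℂ) - Complex.I * z) ^ (a:ℂ))⁻¹ := by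
    rw [← h2, mul_inv_cancel_right₀ hPne]
  -- RHS
  have harg : ((l:ℂ) - Complex.I * z).arg ≠ Real.pi := by
    intro h
    rw [Complex.arg_eq_pi_iff] at h
    have : ((l:ℂ) - Complex.I * z).re = l := by simp [Complex.mul_re]
    rw [this] at h
    linarith [h.1]
  have hrhs : ((l : ℂ) / ((l:ℂ) - Complex.I * z)) ^ (a : ℂ)
      = (l:ℂ) ^ (a:ℂ) * (((l:ℂ) - Complex.I * z) ^ (a:ℂ))⁻¹ := by
    rw [div_eq_mul_inv, ofReal_mul_cpow hl (inv_ne_zero hne), Complex.inv_cpow _ _ harg]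
  have hs : (l ^ a / Real.Gamma a) * ((1/l)^a * Real.Gamma a) = 1 := by
    rw [one_div, Real.inv_rpow hl.le]
    field_simp [(Real.rpow_pos_of_pos hl a).ne', (Real.Gamma_pos_of_pos ha).ne']
  have hsC : ((l ^ a / Real.Gamma a : ℝ) : ℂ) * (((1/l) ^ a * Real.Gamma a : ℝ) : ℂ) = 1 := by
    rw [← Complex.ofReal_mul, hs, Complex.ofReal_one]
  rw [h1, hFi, hrhs]
  linear_combination ((l:ℂ) ^ (a:ℂ) * (((l:ℂ) - Complex.I * z) ^ (a:ℂ))⁻¹) * hsC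

end BilateralGammaAux

open BilateralGammaAux

/-- The bilateral Gamma distribution `Γ(α⁺,λ⁺;α⁻,λ⁻)`: the law of `X − Y` for independent
`X ~ Γ(α⁺,λ⁺)`, `Y ~ Γ(α⁻,λ⁻)`, i.e. the pushforward of the product measure under
`(x,y) ↦ x − y`. -/
noncomputable def bilateralGammaMeasure (ap lp am lm : ℝ) : Measure ℝ :=
  ((gammaMeasure ap lp).prod (gammaMeasure am lm)).map (fun p => p.1 - p.2)

/-- the characteristic function of the bilateral Gamma distribution
`Γ(α⁺,λ⁺;α⁻,λ⁻)` is `φ(z) = (λ⁺/(λ⁺ − iz))^{α⁺} · (λ⁻/(λ⁻ + iz))^{α⁻}`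
(principal branch powers). -/
theorem bilateralGamma_charFun (ap lp am lm : ℝ)
    (hap : 0 < ap) (hlp : 0 < lp) (ham : 0 < am) (hlm : 0 < lm) (z : ℝ) :
    ∫ x, Complex.exp (Complex.I * z * x) ∂(bilateralGammaMeasure ap lp am lm)
      = ((lp : ℂ) / (lp - Complex.I * z)) ^ (ap : ℂ)
        * ((lm : ℂ) / (lm + Complex.I * z)) ^ (am : ℂ) := by
  haveI := isProbabilityMeasure_gammaMeasure hap hlp
  haveI := isProbabilityMeasure_gammaMeasure ham hlm
  rw [bilateralGammaMeasure, integral_map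
    ((show Measurable fun p : ℝ × ℝ => p.1 - p.2 by fun_prop).aemeasurable)
    ((show Continuous fun x : ℝ => Complex.exp (Complex.I * z * x) by fun_prop).aestronglyMeasurable)]
  have hsplit : ∀ p : ℝ × ℝ, Complex.exp (Complex.I * z * ((p.1 - p.2 : ℝ) : ℂ))
      = Complex.exp (Complex.I * z * p.1) * Complex.exp (Complex.I * ((-z : ℝ) : ℂ) * p.2) := by
    intro p
    rw [← Complex.exp_add]
    congr 1
    push_cast
    ring
  simp_rw [hsplit]
  rw [MeasureTheory.integral_prod_mul (μ := gammaMeasure ap lp) (ν := gammaMeasure am lm)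
    (f := fun x : ℝ => Complex.exp (Complex.I * z * x))
    (g := fun y : ℝ => Complex.exp (Complex.I * ((-z : ℝ) : ℂ) * y)),
    charFun_gamma ap lp hap hlp z, charFun_gamma am lm ham hlm (-z)]
  congr 2
  push_cast
  ring
end

section
/- Let α₁⁺, α₂⁺, λ⁺, α₁⁻, α₂⁻, λ⁻ > 0, and let Z₁ and Z₂ be independent real random variables with Z₁ ~ Γ(α₁⁺,λ⁺;α₁⁻,λ⁻) and Z₂ ~ Γ(α₂⁺,λ⁺;α₂⁻,λ⁻). Then Z₁ + Z₂ ~ Γ(α₁⁺+α₂⁺, λ⁺; α₁⁻+α₂⁻, λ⁻); equivalently, the convolution Γ(α₁⁺,λ⁺;α₁⁻,λ⁻) ∗ Γ(α₂⁺,λ⁺;α₂⁻,λ⁻) equals Γ(α₁⁺+α₂⁺, λ⁺; α₁⁻+α₂⁻, λ⁻). -/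
open MeasureTheory ProbabilityTheory Real
open scoped ENNReal

lemma conv_withDensity' (f g : ℝ → ℝ≥0∞) (hf : Measurable f) (hg : Measurable g) :
    (volume.withDensity f).conv (volume.withDensity g)
      = volume.withDensity (fun z => ∫⁻ x, f x * g (z - x)) := by
  ext s hs
  rw [Measure.conv, Measure.map_apply measurable_add hs,
    Measure.prod_apply (measurable_add hs),
    withDensity_apply _ hs]
  calc ∫⁻ x, (volume.withDensity g) (Prod.mk x ⁻¹' ((fun p : ℝ × ℝ => p.1 + p.2) ⁻¹' s))
        ∂(volume.withDensity f)
      = ∫⁻ x, f x * (volume.withDensity g) {y | x + y ∈ s} ∂volume := by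
        rw [lintegral_withDensity_eq_lintegral_mul _ hf]
        · rfl
        · exact measurable_measure_prodMk_left (measurable_add hs)
    _ = ∫⁻ x, f x * ∫⁻ z, g (z - x) * s.indicator 1 z ∂volume ∂volume := by
        refine lintegral_congr fun x => ?_
        congr 1
        have hmeas : MeasurableSet {y : ℝ | x + y ∈ s} :=
          (measurable_const.add measurable_id) hs
        rw [withDensity_apply _ hmeas, ← lintegral_indicator hmeas]
        have h1 : ∀ y : ℝ, {y : ℝ | x + y ∈ s}.indicator g y
            = (fun z => g (z - x) * s.indicator 1 z) (y + x) := by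
          intro y
          simp only [Set.indicator, Set.mem_setOf_eq, Pi.one_apply, add_comm y x,
            add_sub_cancel_left]
          by_cases h : x + y ∈ s <;>
            simp [h, show (y + x ∈ s) = (x + y ∈ s) by rw [add_comm]]
        rw [lintegral_congr h1]
        exact lintegral_add_right_eq_self (fun z => g (z - x) * s.indicator 1 z) x
    _ = ∫⁻ x, ∫⁻ z, f x * (g (z - x) * s.indicator 1 z) ∂volume ∂volume :=
        lintegral_congr fun x => (lintegral_const_mul'' (f x)
          (((hg.comp (measurable_id.sub_const _)).mul
            (measurable_one.indicator hs)).aemeasurable)).symm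
    _ = ∫⁻ z, ∫⁻ x, f x * (g (z - x) * s.indicator 1 z) ∂volume ∂volume := by
        exact lintegral_lintegral_swap ((hf.comp measurable_fst).mul
          ((hg.comp (measurable_snd.sub measurable_fst)).mul
            ((measurable_one.indicator hs).comp measurable_snd))).aemeasurable
    _ = ∫⁻ z in s, ∫⁻ x, f x * g (z - x) ∂volume ∂volume := by
        rw [← lintegral_indicator hs]
        refine lintegral_congr fun z => ?_
        by_cases h : z ∈ s
        · simp only [Set.indicator_of_mem h, Pi.one_apply, mul_one]
        · simp [Set.indicator_of_notMem h]

lemma my_conv_assoc (μ ν ρ : Measure ℝ) [SFinite μ] [SFinite ν] [SFinite ρ] :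
    (μ.conv ν).conv ρ = μ.conv (ν.conv ρ) := by
  simp only [Measure.conv]
  rw [show ρ = Measure.map id ρ from (Measure.map_id).symm]
  rw [Measure.map_prod_map _ _ measurable_add measurable_id,
    Measure.map_map measurable_add (measurable_add.prodMap measurable_id)]
  rw [show Measure.map id ρ = ρ from Measure.map_id]
  rw [show μ = Measure.map id μ from (Measure.map_id).symm]
  rw [Measure.map_prod_map _ _ measurable_id measurable_add,
    Measure.map_map measurable_add (measurable_id.prodMap measurable_add)]
  rw [show Measure.map id μ = μ from Measure.map_id]
  rw [← Measure.prodAssoc_prod,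
    Measure.map_map (measurable_add.comp (measurable_id.prodMap measurable_add))
      MeasurableEquiv.prodAssoc.measurable]
  apply congrFun
  apply congrArg
  ext p
  simp [MeasurableEquiv.prodAssoc, Prod.map, add_assoc]

lemma my_conv_neg (μ ν : Measure ℝ) [SFinite μ] [SFinite ν] :
    (μ.map Neg.neg).conv (ν.map Neg.neg) = (μ.conv ν).map Neg.neg := by
  simp only [Measure.conv]
  rw [Measure.map_prod_map _ _ measurable_neg measurable_neg,
    Measure.map_map measurable_add (measurable_neg.prodMap measurable_neg),
    Measure.map_map measurable_neg measurable_add]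
  apply congrFun
  apply congrArg
  ext p
  simp [Prod.map, neg_add, add_comm]

lemma map_sub_eq_conv (μ ν : Measure ℝ) [SFinite μ] [SFinite ν] :
    (μ.prod ν).map (fun p => p.1 - p.2) = μ.conv (ν.map Neg.neg) := by
  rw [Measure.conv, show μ = μ.map id from (Measure.map_id).symm]
  rw [Measure.map_prod_map _ _ measurable_id measurable_neg,
    Measure.map_map measurable_add (measurable_id.prodMap measurable_neg)]
  rw [show Measure.map id μ = μ from Measure.map_id]
  apply congrFun
  apply congrArg
  ext p
  simp [Prod.map, sub_eq_add_neg]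

noncomputable def betaK (a b r : ℝ) : ℝ≥0∞ :=
  ∫⁻ t in Set.Ioo (0:ℝ) 1,
    ENNReal.ofReal ((r^a/Gamma a * t^(a-1)) * (r^b/Gamma b * (1-t)^(b-1)))

lemma gammaPDF_measurable (a r : ℝ) : Measurable (gammaPDF a r) :=
  (measurable_gammaPDFReal a r).ennreal_ofReal

lemma gamma_conv_density_neg {a b r z : ℝ} (hz : z < 0) :
    ∫⁻ x, gammaPDF a r x * gammaPDF b r (z - x) = 0 := by
  have : ∀ x : ℝ, gammaPDF a r x * gammaPDF b r (z - x) = 0 := by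
    intro x
    rcases lt_or_ge x 0 with hx | hx
    · rw [gammaPDF_of_neg hx, zero_mul]
    · rw [gammaPDF_of_neg (by linarith : z - x < 0), mul_zero]
  simp only [this, lintegral_zero]

lemma gamma_conv_density_pos {a b r z : ℝ} (ha : 0 < a) (hb : 0 < b) (hr : 0 < r)
    (hz : 0 < z) :
    ∫⁻ x, gammaPDF a r x * gammaPDF b r (z - x)
      = ENNReal.ofReal (z ^ (a+b-1) * exp (-(r*z))) * betaK a b r := by
  set F : ℝ → ℝ≥0∞ := fun x => gammaPDF a r x * gammaPDF b r (z - x) with hF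
  have hFm : Measurable F :=
    (gammaPDF_measurable a r).mul
      ((gammaPDF_measurable b r).comp (measurable_const.sub measurable_id))
  -- change of variables x = z * t
  have hmap : ∫⁻ t, F (z * t) = ENNReal.ofReal z⁻¹ * ∫⁻ x, F x := by
    rw [← lintegral_map hFm (measurable_const_mul z),
      Real.map_volume_mul_left hz.ne', lintegral_smul_measure,
      abs_of_pos (inv_pos.mpr hz), smul_eq_mul]
  have h1 : ∫⁻ x, F x = ENNReal.ofReal z * ∫⁻ t, F (z * t) := by
    rw [hmap, ← mul_assoc, ← ENNReal.ofReal_mul hz.le, mul_inv_cancel₀ hz.ne',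
      ENNReal.ofReal_one, one_mul]
  -- pointwise identification on (0,1)
  have h2 : ∫⁻ t, F (z * t)
      = ∫⁻ t, (Set.Ioo (0:ℝ) 1).indicator (fun t => ENNReal.ofReal
          ((z^(a+b-2) * exp (-(r*z)))
            * ((r^a/Gamma a * t^(a-1)) * (r^b/Gamma b * (1-t)^(b-1))))) t := by
    apply lintegral_congr_ae
    have hnull : (({0, 1} : Set ℝ))ᶜ ∈ (MeasureTheory.ae volume) := by
      refine compl_mem_ae_iff.mpr ?_
      exact measure_union_null volume_singleton volume_singleton
    filter_upwards [hnull] with t ht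
    simp only [Set.mem_compl_iff, Set.mem_insert_iff, Set.mem_singleton_iff, not_or] at ht
    obtain ⟨ht0, ht1⟩ := ht
    rcases lt_trichotomy t 0 with h | h | h
    · rw [Set.indicator_of_notMem (by simp [Set.mem_Ioo]; intro; linarith), hF]
      simp only
      rw [gammaPDF_of_neg (by nlinarith : z * t < 0), zero_mul]
    · exact absurd h ht0
    · rcases lt_trichotomy t 1 with h1' | h1' | h1'
      · rw [Set.indicator_of_mem (Set.mem_Ioo.mpr ⟨h, h1'⟩), hF]
        simp only
        rw [gammaPDF_of_nonneg (by positivity : (0:ℝ) ≤ z * t),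
          gammaPDF_of_nonneg (by nlinarith : (0:ℝ) ≤ z - z * t),
          ← ENNReal.ofReal_mul (by positivity)]
        congr 1
        have h1t : (0:ℝ) < 1 - t := by linarith
        have hzt : z - z * t = z * (1 - t) := by ring
        rw [hzt, Real.mul_rpow hz.le (le_of_lt h), Real.mul_rpow hz.le h1t.le]
        have hE : exp (-(r*z)) = exp (-(r*(z*t))) * exp (-(r*(z*(1-t)))) := by
          rw [← Real.exp_add]; ring_nf
        have hZ : z^(a+b-2) = z^(a-1) * z^(b-1) := by
          rw [← Real.rpow_add hz]; ring_nf
        rw [hE, hZ]; ring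
      · exact absurd h1' ht1
      · rw [Set.indicator_of_notMem (by simp [Set.mem_Ioo]; intro; linarith), hF]
        simp only
        rw [gammaPDF_of_neg (by nlinarith : z - z * t < 0), mul_zero]
  rw [h1, h2, lintegral_indicator measurableSet_Ioo]
  have h3 : ∫⁻ t in Set.Ioo (0:ℝ) 1, ENNReal.ofReal
        ((z^(a+b-2) * exp (-(r*z)))
          * ((r^a/Gamma a * t^(a-1)) * (r^b/Gamma b * (1-t)^(b-1))))
      = ENNReal.ofReal (z^(a+b-2) * exp (-(r*z))) * betaK a b r := by
    rw [betaK, ← lintegral_const_mul'' _ (by fun_prop : Measurable (fun t : ℝ =>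
      ENNReal.ofReal ((r^a/Gamma a * t^(a-1)) * (r^b/Gamma b * (1-t)^(b-1))))).aemeasurable]
    refine setLIntegral_congr_fun_ae measurableSet_Ioo (ae_of_all _ fun t ht => ?_)
    rw [← ENNReal.ofReal_mul (by positivity)]
  rw [h3, ← mul_assoc, ← ENNReal.ofReal_mul hz.le]
  congr 2
  have : z * z^(a+b-2) = z^(a+b-1) := by
    have h := Real.rpow_add hz 1 (a+b-2)
    rw [Real.rpow_one] at h
    rw [← h]; ring_nf
  rw [← mul_assoc, this]

lemma gammaMeasure_conv {a b r : ℝ} (ha : 0 < a) (hb : 0 < b) (hr : 0 < r) :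
    (gammaMeasure a r).conv (gammaMeasure b r) = gammaMeasure (a+b) r := by
  haveI := isProbabilityMeasure_gammaMeasure ha hr
  haveI := isProbabilityMeasure_gammaMeasure hb hr
  haveI := isProbabilityMeasure_gammaMeasure (by linarith : (0:ℝ) < a + b) hr
  set K' : ℝ≥0∞ := betaK a b r * ENNReal.ofReal (Gamma (a+b) / r^(a+b)) with hK'
  have hconv : (gammaMeasure a r).conv (gammaMeasure b r) = K' • gammaMeasure (a+b) r := by
    rw [gammaMeasure, gammaMeasure, gammaMeasure,
      conv_withDensity' _ _ (gammaPDF_measurable a r) (gammaPDF_measurable b r),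
      ← withDensity_smul K' (gammaPDF_measurable (a+b) r)]
    apply withDensity_congr_ae
    have hnull : ({0}ᶜ : Set ℝ) ∈ (MeasureTheory.ae volume) :=
      compl_mem_ae_iff.mpr volume_singleton
    filter_upwards [hnull] with z hz0
    simp only [Set.mem_compl_iff, Set.mem_singleton_iff] at hz0
    simp only [Pi.smul_apply, smul_eq_mul]
    rcases lt_or_gt_of_ne hz0 with hz | hz
    · rw [gamma_conv_density_neg hz, gammaPDF_of_neg hz, mul_zero]
    · have hG : (0:ℝ) < Gamma (a+b) := Gamma_pos_of_pos (by linarith)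
      have hrs : (0:ℝ) < r^(a+b) := rpow_pos_of_pos hr _
      have hc : ENNReal.ofReal (Gamma (a+b)/r^(a+b)) * ENNReal.ofReal (r^(a+b)/Gamma (a+b))
          = 1 := by
        rw [← ENNReal.ofReal_mul (by positivity),
          show Gamma (a+b)/r^(a+b) * (r^(a+b)/Gamma (a+b)) = 1 from by field_simp,
          ENNReal.ofReal_one]
      rw [gamma_conv_density_pos ha hb hr hz, gammaPDF_of_nonneg hz.le,
        mul_assoc (r^(a+b)/Gamma (a+b)),
        ENNReal.ofReal_mul (by positivity : (0:ℝ) ≤ r^(a+b)/Gamma (a+b)), hK',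
        mul_assoc (betaK a b r), ← mul_assoc (ENNReal.ofReal (Gamma (a+b)/r^(a+b))), hc,
        one_mul, mul_comm]
  have hK1 : K' = 1 := by
    have h2 : ((gammaMeasure a r).conv (gammaMeasure b r)) Set.univ = 1 := measure_univ
    rw [hconv] at h2
    simpa [Measure.smul_apply, smul_eq_mul, measure_univ] using h2
  rw [hconv, hK1, one_smul]

open MeasureTheory ProbabilityTheory

/-- if `Z₁ ~ Γ(α₁⁺,λ⁺;α₁⁻,λ⁻)` and `Z₂ ~ Γ(α₂⁺,λ⁺;α₂⁻,λ⁻)` are independent, then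
`Z₁ + Z₂ ~ Γ(α₁⁺+α₂⁺,λ⁺;α₁⁻+α₂⁻,λ⁻)`; equivalently the corresponding convolution identity
holds. -/
theorem bilateralGamma_add (a1p a2p lp a1m a2m lm : ℝ)
    (ha1p : 0 < a1p) (ha2p : 0 < a2p) (hlp : 0 < lp)
    (ha1m : 0 < a1m) (ha2m : 0 < a2m) (hlm : 0 < lm)
    {Ω : Type*} [MeasurableSpace Ω] (P : Measure Ω) [IsProbabilityMeasure P]
    (Z₁ Z₂ : Ω → ℝ) (hZ₁ : Measurable Z₁) (hZ₂ : Measurable Z₂)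
    (hindep : IndepFun Z₁ Z₂ P)
    (hlaw₁ : P.map Z₁ = bilateralGammaMeasure a1p lp a1m lm)
    (hlaw₂ : P.map Z₂ = bilateralGammaMeasure a2p lp a2m lm) :
    P.map (fun ω => Z₁ ω + Z₂ ω) = bilateralGammaMeasure (a1p + a2p) lp (a1m + a2m) lm
      ∧ (bilateralGammaMeasure a1p lp a1m lm).conv (bilateralGammaMeasure a2p lp a2m lm)
          = bilateralGammaMeasure (a1p + a2p) lp (a1m + a2m) lm := by
  haveI h1 := isProbabilityMeasure_gammaMeasure ha1p hlp
  haveI h2 := isProbabilityMeasure_gammaMeasure ha2p hlp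
  haveI h3 := isProbabilityMeasure_gammaMeasure ha1m hlm
  haveI h4 := isProbabilityMeasure_gammaMeasure ha2m hlm
  haveI h7 := isProbabilityMeasure_gammaMeasure (by linarith : (0:ℝ) < a1p + a2p) hlp
  haveI h8 := isProbabilityMeasure_gammaMeasure (by linarith : (0:ℝ) < a1m + a2m) hlm
  haveI h5 : IsProbabilityMeasure ((gammaMeasure a1m lm).map Neg.neg) :=
    Measure.isProbabilityMeasure_map measurable_neg.aemeasurable
  haveI h6 : IsProbabilityMeasure ((gammaMeasure a2m lm).map Neg.neg) :=
    Measure.isProbabilityMeasure_map measurable_neg.aemeasurable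
  have key : (bilateralGammaMeasure a1p lp a1m lm).conv (bilateralGammaMeasure a2p lp a2m lm)
      = bilateralGammaMeasure (a1p + a2p) lp (a1m + a2m) lm := by
    set A := gammaMeasure a1p lp
    set B := (gammaMeasure a1m lm).map Neg.neg with hB
    set C := gammaMeasure a2p lp
    set D := (gammaMeasure a2m lm).map Neg.neg with hD
    have e1 : bilateralGammaMeasure a1p lp a1m lm = A.conv B := map_sub_eq_conv _ _
    have e2 : bilateralGammaMeasure a2p lp a2m lm = C.conv D := map_sub_eq_conv _ _
    have e3 : bilateralGammaMeasure (a1p + a2p) lp (a1m + a2m) lm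
        = (gammaMeasure (a1p + a2p) lp).conv ((gammaMeasure (a1m + a2m) lm).map Neg.neg) :=
      map_sub_eq_conv _ _
    rw [e1, e2, e3]
    have hshuffle : (A.conv B).conv (C.conv D) = (A.conv C).conv (B.conv D) := by
      rw [my_conv_assoc A B (C.conv D), ← my_conv_assoc B C D, Measure.conv_comm B C,
        my_conv_assoc C B D, ← my_conv_assoc A C (B.conv D)]
    rw [hshuffle, gammaMeasure_conv ha1p ha2p hlp, hB, hD, my_conv_neg,
      gammaMeasure_conv ha1m ha2m hlm]
  refine ⟨?_, key⟩
  have hjoint : P.map (fun ω => (Z₁ ω, Z₂ ω)) = (P.map Z₁).prod (P.map Z₂) :=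
    (indepFun_iff_map_prod_eq_prod_map_map hZ₁.aemeasurable hZ₂.aemeasurable).mp hindep
  have : P.map (fun ω => Z₁ ω + Z₂ ω)
      = ((P.map (fun ω => (Z₁ ω, Z₂ ω))).map (fun p : ℝ × ℝ => p.1 + p.2)) := by
    rw [Measure.map_map measurable_add (hZ₁.prodMk hZ₂)]
    rfl
  rw [this, hjoint, hlaw₁, hlaw₂]
  exact key
end

section
/- Let α⁺, λ⁺, α⁻, λ⁻ > 0 and let Z ~ Γ(α⁺,λ⁺;α⁻,λ⁻), with cumulant generating function Ψ(z) = ln E[e^{zZ}] for z ∈ (−λ⁻, λ⁺). Then for every n ≥ 1, the n-th cumulant κ_n, i.e. the n-th iterated derivative of Ψ at 0, equals κ_n = (n−1)! · ( α⁺/(λ⁺)^n + (−1)^n α⁻/(λ⁻)^n ). -/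
open MeasureTheory ProbabilityTheory Set

lemma gamma_mgf {a r t : ℝ} (ha : 0 < a) (hr : 0 < r) (ht : t < r) :
    ∫ x, Real.exp (t * x) ∂(gammaMeasure a r) = r ^ a / (r - t) ^ a := by
  have hrt : 0 < r - t := by linarith
  have hmeas : Measurable fun x => (gammaPDFReal a r x).toNNReal :=
    (measurable_gammaPDFReal a r).real_toNNReal
  rw [gammaMeasure,
    show gammaPDF a r = fun x => ((gammaPDFReal a r x).toNNReal : ENNReal) from rfl,
    integral_withDensity_eq_integral_smul hmeas]
  have h0 : ∀ᵐ x : ℝ, x ≠ 0 := by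
    rw [ae_iff]
    simp only [not_not]
    exact Real.volume_singleton
  have hcongr : (fun x => (gammaPDFReal a r x).toNNReal • Real.exp (t * x))
      =ᶠ[ae volume] (Ioi (0:ℝ)).indicator
        (fun x => r ^ a / Real.Gamma a * (x ^ (a-1) * Real.exp (-((r - t) * x)))) := by
    filter_upwards [h0] with x hx
    rcases lt_or_gt_of_ne hx with hneg | hpos
    · rw [indicator_of_notMem (by simpa using hneg.le)]
      simp [gammaPDFReal, not_le.2 hneg]
    · rw [indicator_of_mem (by simpa using hpos)]
      have hnn : 0 ≤ gammaPDFReal a r x := gammaPDFReal_nonneg ha hr x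
      rw [NNReal.smul_def, Real.coe_toNNReal _ hnn]
      rw [gammaPDFReal, if_pos hpos.le, smul_eq_mul, mul_assoc, mul_assoc, ← Real.exp_add]
      have : -(r * x) + t * x = -((r - t) * x) := by ring
      rw [this]
  rw [integral_congr_ae hcongr, integral_indicator measurableSet_Ioi,
    integral_const_mul, Real.integral_rpow_mul_exp_neg_mul_Ioi ha hrt]
  have hG : Real.Gamma a ≠ 0 := (Real.Gamma_pos_of_pos ha).ne'
  rw [Real.div_rpow (by norm_num) hrt.le, Real.one_rpow]
  field_simp

lemma bilateral_mgf {ap lp am lm : ℝ} (hap : 0 < ap) (hlp : 0 < lp) (ham : 0 < am)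
    (hlm : 0 < lm) {z : ℝ} (hz1 : -lm < z) (hz2 : z < lp) :
    ∫ x, Real.exp (z * x) ∂(bilateralGammaMeasure ap lp am lm)
      = (lp ^ ap / (lp - z) ^ ap) * (lm ^ am / (lm + z) ^ am) := by
  have h1 : IsProbabilityMeasure (gammaMeasure ap lp) := isProbabilityMeasure_gammaMeasure hap hlp
  have h2 : IsProbabilityMeasure (gammaMeasure am lm) := isProbabilityMeasure_gammaMeasure ham hlm
  rw [bilateralGammaMeasure, integral_map (by fun_prop : Measurable fun p : ℝ × ℝ => p.1 - p.2).aemeasurable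
    (Measurable.aestronglyMeasurable (by fun_prop))]
  have : ∀ p : ℝ × ℝ, Real.exp (z * (p.1 - p.2)) = Real.exp (z * p.1) * Real.exp (-z * p.2) := by
    intro p; rw [← Real.exp_add]; ring_nf
  simp_rw [this]
  rw [integral_prod_mul (fun x => Real.exp (z * x)) (fun y => Real.exp (-z * y)),
    gamma_mgf hap hlp hz2, gamma_mgf ham hlm (by linarith), sub_neg_eq_add]

lemma hasDerivAt_one_div_pow_sub {c x : ℝ} (h : c - x ≠ 0) (k : ℕ) :
    HasDerivAt (fun z : ℝ => 1 / (c - z) ^ (k+1)) ((k+1) / (c - x) ^ (k+2)) x := by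
  have h1 : HasDerivAt (fun z : ℝ => (c - z) ^ (k+1)) (((k+1 : ℕ)) * (c - x) ^ k * (-1)) x := by
    simpa using ((hasDerivAt_id x).const_sub c).fun_pow (k+1)
  have h2 := h1.inv (pow_ne_zero _ h)
  simp only [one_div]
  convert h2 using 1
  rfl
  rfl
  rfl
  field_simp
  push_cast
  ring

lemma hasDerivAt_one_div_pow_add {c x : ℝ} (h : c + x ≠ 0) (k : ℕ) :
    HasDerivAt (fun z : ℝ => 1 / (c + z) ^ (k+1)) (-((k+1) / (c + x) ^ (k+2))) x := by
  have h1 : HasDerivAt (fun z : ℝ => (c + z) ^ (k+1)) (((k+1 : ℕ)) * (c + x) ^ k * 1) x := by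
    simpa using ((hasDerivAt_id x).const_add c).fun_pow (k+1)
  have h2 := h1.inv (pow_ne_zero _ h)
  simp only [one_div]
  convert h2 using 1
  rfl
  rfl
  rfl
  field_simp
  push_cast
  ring

/-- for `Z ~ Γ(α⁺,λ⁺;α⁻,λ⁻)` with cumulant generating function
`Ψ(z) = ln E[e^{zZ}]`, the `n`-th cumulant (the `n`-th iterated derivative of `Ψ` at `0`)
equals `κ_n = (n−1)!(α⁺/(λ⁺)ⁿ + (−1)ⁿ α⁻/(λ⁻)ⁿ)` for every `n ≥ 1`. -/
theorem bilateralGamma_cumulants (ap lp am lm : ℝ)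
    (hap : 0 < ap) (hlp : 0 < lp) (ham : 0 < am) (hlm : 0 < lm) (n : ℕ) (hn : 1 ≤ n) :
    iteratedDeriv n
        (fun z => Real.log (∫ x, Real.exp (z * x) ∂(bilateralGammaMeasure ap lp am lm))) 0
      = (Nat.factorial (n - 1) : ℝ) * (ap / lp ^ n + (-1 : ℝ) ^ n * am / lm ^ n) := by
  set S : Set ℝ := Ioo (-lm) lp with hSdef
  have hSopen : IsOpen S := isOpen_Ioo
  have h0S : (0 : ℝ) ∈ S := ⟨by linarith, hlp⟩
  set F : ℝ → ℝ := fun z =>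
    (ap * Real.log lp - ap * Real.log (lp - z)) + (am * Real.log lm - am * Real.log (lm + z))
    with hFdef
  -- on S, the log-mgf equals F
  have hlog : ∀ z ∈ S, Real.log (∫ x, Real.exp (z * x) ∂(bilateralGammaMeasure ap lp am lm))
      = F z := by
    intro z hz
    have hz1 : -lm < z := hz.1
    have hz2 : z < lp := hz.2
    have hlpz : 0 < lp - z := by linarith
    have hlmz : 0 < lm + z := by linarith
    rw [bilateral_mgf hap hlp ham hlm hz1 hz2]
    rw [Real.log_mul (by positivity) (by positivity),
      Real.log_div (by positivity) (by positivity),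
      Real.log_div (by positivity) (by positivity),
      Real.log_rpow hlp, Real.log_rpow hlpz, Real.log_rpow hlm, Real.log_rpow hlmz]
  -- derivatives of F on S
  have key : ∀ m : ℕ, ∀ z ∈ S, iteratedDeriv (m+1) F z
      = (Nat.factorial m : ℝ) * (ap / (lp - z) ^ (m+1) + (-1:ℝ) ^ (m+1) * am / (lm + z) ^ (m+1)) := by
    intro m
    induction m with
    | zero =>
      intro z hz
      have hlpz : 0 < lp - z := by linarith [hz.2]
      have hlmz : 0 < lm + z := by linarith [hz.1]
      have hd : HasDerivAt F (ap / (lp - z) - am / (lm + z)) z := by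
        have h1 : HasDerivAt (fun w : ℝ => Real.log (lp - w)) ((-1) / (lp - z)) z :=
          (((hasDerivAt_id z).const_sub lp)).log hlpz.ne'
        have h2 : HasDerivAt (fun w : ℝ => Real.log (lm + w)) (1 / (lm + z)) z :=
          (((hasDerivAt_id z).const_add lm)).log hlmz.ne'
        have := ((hasDerivAt_const z (ap * Real.log lp)).sub (h1.const_mul ap)).add
          ((hasDerivAt_const z (am * Real.log lm)).sub (h2.const_mul am))
        convert this using 1
        rfl
        rfl
        rfl
        field_simp
        ring
      rw [iteratedDeriv_one, hd.deriv]
      simp only [Nat.factorial, Nat.cast_one, one_mul, pow_one]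
      ring
    | succ k ih =>
      intro z hz
      have hlpz : 0 < lp - z := by linarith [hz.2]
      have hlmz : 0 < lm + z := by linarith [hz.1]
      rw [iteratedDeriv_succ]
      have hev : iteratedDeriv (k+1) F =ᶠ[nhds z] fun w =>
          (Nat.factorial k : ℝ) * (ap / (lp - w) ^ (k+1) + (-1:ℝ) ^ (k+1) * am / (lm + w) ^ (k+1)) := by
        filter_upwards [hSopen.mem_nhds hz] with w hw
        exact ih w hw
      rw [hev.deriv_eq]
      have hd : HasDerivAt (fun w : ℝ =>
          (Nat.factorial k : ℝ) * (ap / (lp - w) ^ (k+1) + (-1:ℝ) ^ (k+1) * am / (lm + w) ^ (k+1)))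
          ((Nat.factorial (k+1) : ℝ) *
            (ap / (lp - z) ^ (k+2) + (-1:ℝ) ^ (k+2) * am / (lm + z) ^ (k+2))) z := by
        have h1 := (hasDerivAt_one_div_pow_sub hlpz.ne' k).const_mul ap
        have h2 := (hasDerivAt_one_div_pow_add hlmz.ne' k).const_mul ((-1:ℝ) ^ (k+1) * am)
        have := ((h1.add h2).const_mul ((Nat.factorial k : ℝ)))
        convert this using 1
        rfl
        rfl
        · funext w
          field_simp
          rfl
        · rw [Nat.factorial_succ]
          push_cast
          field_simp
          ring
      rw [hd.deriv]
  -- transfer from the log-mgf to F near 0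
  have hev0 : (fun z => Real.log (∫ x, Real.exp (z * x) ∂(bilateralGammaMeasure ap lp am lm)))
      =ᶠ[nhds 0] F := by
    filter_upwards [hSopen.mem_nhds h0S] with w hw
    exact hlog w hw
  rw [hev0.iteratedDeriv_eq n]
  obtain ⟨m, rfl⟩ : ∃ m, n = m + 1 := ⟨n - 1, (Nat.succ_pred_eq_of_pos hn).symm⟩
  rw [key m 0 h0S]
  simp
end

section
/- Let α⁺, λ⁺, α⁻, λ⁻ > 0. Then the bilateral Gamma distribution Γ(α⁺,λ⁺;α⁻,λ⁻) is absolutely continuous with respect to Lebesgue measure with density f given for x > 0 by f(x) = [(λ⁺)^{α⁺}(λ⁻)^{α⁻} / ((λ⁺+λ⁻)^{α⁻} Γ(α⁺) Γ(α⁻))] e^{−λ⁺x} ∫₀^∞ v^{α⁻−1} (x + v/(λ⁺+λ⁻))^{α⁺−1} e^{−v} dv, and for x < 0 by the symmetric expression with the roles of (α⁺,λ⁺) and (α⁻,λ⁻) interchanged and x replaced by |x|: f(x) = [(λ⁻)^{α⁻}(λ⁺)^{α⁺} / ((λ⁺+λ⁻)^{α⁺} Γ(α⁻) Γ(α⁺))]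 e^{−λ⁻|x|} ∫₀^∞ v^{α⁺−1} (|x| + v/(λ⁺+λ⁻))^{α⁻−1} e^{−v} dv. -/
open MeasureTheory ProbabilityTheory

open Real Set
open scoped ENNReal

lemma measurable_phi (a1 a2 c s : ℝ) :
    Measurable (fun v : ℝ => v ^ (a2 - 1) * (s + v / c) ^ (a1 - 1) * Real.exp (-v)) := by
  fun_prop

lemma gamma_conv_key (a1 l1 a2 l2 s : ℝ) (ha1 : 0 < a1) (hl1 : 0 < l1)
    (ha2 : 0 < a2) (hl2 : 0 < l2) (hs : 0 < s)
    (hfin : (∫⁻ y, gammaPDF a1 l1 (s + y) * gammaPDF a2 l2 y) ≠ ⊤) :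
    (∫⁻ y, gammaPDF a1 l1 (s + y) * gammaPDF a2 l2 y)
      = ENNReal.ofReal (l1 ^ a1 * l2 ^ a2 / ((l1 + l2) ^ a2 * Real.Gamma a1 * Real.Gamma a2)
          * Real.exp (-l1 * s)
          * ∫ v in Set.Ioi (0 : ℝ),
              v ^ (a2 - 1) * (s + v / (l1 + l2)) ^ (a1 - 1) * Real.exp (-v)) := by
  have hc : 0 < l1 + l2 := by linarith
  set c := l1 + l2 with hcdef
  set φ : ℝ → ℝ := fun v => v ^ (a2 - 1) * (s + v / c) ^ (a1 - 1) * Real.exp (-v) with hφ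
  set C : ℝ := l1 ^ a1 * l2 ^ a2 / (c ^ a2 * Real.Gamma a1 * Real.Gamma a2) with hC
  have hCpos : 0 < C := by
    have := Real.Gamma_pos_of_pos ha1
    have := Real.Gamma_pos_of_pos ha2
    positivity
  set D : ℝ := C * c * Real.exp (-l1 * s) with hD
  have hDpos : 0 < D := by positivity
  -- step 1 : restrict to Ioi 0 and rewrite integrand
  have step1 : (∫⁻ y, gammaPDF a1 l1 (s + y) * gammaPDF a2 l2 y)
      = ∫⁻ y in Ioi (0:ℝ), ENNReal.ofReal (D * φ (c * y)) := by
    rw [← setLIntegral_eq_of_support_subset (s := Ici (0:ℝ)), ← restrict_Ioi_eq_restrict_Ici]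
    · refine setLIntegral_congr_fun measurableSet_Ioi (fun y hy => ?_)
      have hy : (0:ℝ) < y := hy
      rw [gammaPDF_of_nonneg (by linarith), gammaPDF_of_nonneg hy.le,
        ← ENNReal.ofReal_mul (by positivity)]
      congr 1
      have hphi : φ (c * y) = c ^ (a2 - 1) * y ^ (a2 - 1) * (s + y) ^ (a1 - 1)
          * Real.exp (-(c * y)) := by
        rw [hφ]
        simp only
        rw [mul_div_cancel_left₀ _ hc.ne', Real.mul_rpow hc.le hy.le]
      rw [hphi, hD, hC]
      have hexp : Real.exp (-(l1 * (s + y))) * Real.exp (-(l2 * y))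
          = Real.exp (-(l1 * s)) * Real.exp (-(c * y)) := by
        rw [← Real.exp_add, ← Real.exp_add]; congr 1; rw [hcdef]; ring
      have hcc : c ^ (a2 - 1) = c ^ a2 / c := by
        rw [Real.rpow_sub hc, Real.rpow_one]
      have hG1 := (Real.Gamma_pos_of_pos ha1).ne'
      have hG2 := (Real.Gamma_pos_of_pos ha2).ne'
      have hca2 := (Real.rpow_pos_of_pos hc a2).ne'
      have hcne := hc.ne'
      rw [hcc, neg_mul, hcdef] at *
      field_simp
      rw [← Real.exp_add, ← Real.exp_add]; congr 1; ring
      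
    · intro y hy
      simp only [Function.mem_support, ne_eq] at hy
      by_contra hy0
      exact hy (by rw [show gammaPDF a2 l2 y = 0 from gammaPDF_of_neg (by simpa using hy0),
        mul_zero])
  have hmφ : Measurable fun v => ENNReal.ofReal (φ v) :=
    (measurable_phi a1 a2 c s).ennreal_ofReal
  set J : ℝ≥0∞ := ∫⁻ v in Ioi (0:ℝ), ENNReal.ofReal (φ v) with hJ
  have hpre : (fun y : ℝ => c * y) ⁻¹' (Ioi 0) = Ioi (0:ℝ) := by
    ext y
    simp only [Set.mem_preimage, Set.mem_Ioi]
    constructor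
    · intro h; nlinarith
    · intro h; positivity
  have step2 : ∫⁻ y in Ioi (0:ℝ), ENNReal.ofReal (φ (c * y))
      = ENNReal.ofReal c⁻¹ * J := by
    have h1 : ∫⁻ y in Ioi (0:ℝ), ENNReal.ofReal (φ (c * y))
        = ∫⁻ v, ENNReal.ofReal (φ v)
            ∂(Measure.map (fun y => c * y) (volume.restrict (Ioi 0))) := by
      rw [lintegral_map hmφ (measurable_const_mul c)]
    rw [h1, ← hpre, ← Measure.restrict_map (measurable_const_mul c) measurableSet_Ioi,
      Real.map_volume_mul_left hc.ne', Measure.restrict_smul, lintegral_smul_measure,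
      abs_of_pos (inv_pos.mpr hc), smul_eq_mul]
  have key0 : (∫⁻ y, gammaPDF a1 l1 (s + y) * gammaPDF a2 l2 y)
      = ENNReal.ofReal D * (ENNReal.ofReal c⁻¹ * J) := by
    rw [step1]
    simp_rw [ENNReal.ofReal_mul hDpos.le]
    rw [lintegral_const_mul' _ _ ENNReal.ofReal_ne_top, step2]
  have hJ_ne : J ≠ ⊤ := by
    intro h
    apply hfin
    rw [key0, h, ENNReal.mul_top (ENNReal.ofReal_pos.mpr (inv_pos.mpr hc)).ne',
      ENNReal.mul_top (ENNReal.ofReal_pos.mpr hDpos).ne']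
  have step4 : (∫ v in Ioi (0:ℝ), φ v) = J.toReal := by
    rw [hJ, integral_eq_lintegral_of_nonneg_ae]
    · exact (ae_restrict_iff' measurableSet_Ioi).mpr (ae_of_all _ fun v hv => by
        have hv' : (0:ℝ) < v := hv
        exact mul_nonneg (mul_nonneg (Real.rpow_nonneg hv'.le _)
          (Real.rpow_nonneg (by positivity) _)) (Real.exp_pos _).le)
    · exact (measurable_phi a1 a2 c s).aestronglyMeasurable
  have hint : (∫ v in Set.Ioi (0:ℝ),
      v ^ (a2 - 1) * (s + v / (l1 + l2)) ^ (a1 - 1) * Real.exp (-v)) = J.toReal := step4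
  rw [key0, hint, hC]
  rw [show (l1 ^ a1 * l2 ^ a2 / ((l1 + l2) ^ a2 * Real.Gamma a1 * Real.Gamma a2)) = C from rfl]
  rw [ENNReal.ofReal_mul (by positivity : (0:ℝ) ≤ C * Real.exp (-l1 * s)),
    ENNReal.ofReal_toReal hJ_ne, ← mul_assoc, ← ENNReal.ofReal_mul hDpos.le]
  congr 2
  rw [hD]
  field_simp

lemma bilateral_eq (ap lp am lm : ℝ) (hap : 0 < ap) (hlp : 0 < lp)
    (ham : 0 < am) (hlm : 0 < lm) :
    bilateralGammaMeasure ap lp am lm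
      = volume.withDensity (fun s => ∫⁻ y, gammaPDF ap lp (s + y) * gammaPDF am lm y) := by
  have hg : Measurable (gammaPDF ap lp) := (measurable_gammaPDFReal ap lp).ennreal_ofReal
  have hh : Measurable (gammaPDF am lm) := (measurable_gammaPDFReal am lm).ennreal_ofReal
  have ipp : IsProbabilityMeasure (gammaMeasure ap lp) := isProbabilityMeasure_gammaMeasure hap hlp
  have ipm : IsProbabilityMeasure (gammaMeasure am lm) := isProbabilityMeasure_gammaMeasure ham hlm
  have hT : Measurable fun p : ℝ × ℝ => p.1 - p.2 := measurable_fst.sub measurable_snd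
  ext A hA
  rw [bilateralGammaMeasure, Measure.map_apply hT hA, withDensity_apply _ hA]
  set S : Set (ℝ × ℝ) := (fun p : ℝ × ℝ => p.1 - p.2) ⁻¹' A with hSdef
  have hSm : MeasurableSet S := hT hA
  rw [Measure.prod_apply hSm]
  have hsec : Measurable fun x => gammaMeasure am lm (Prod.mk x ⁻¹' S) :=
    measurable_measure_prodMk_left hSm
  rw [show gammaMeasure ap lp = volume.withDensity (gammaPDF ap lp) from rfl,
    lintegral_withDensity_eq_lintegral_mul _ hg hsec]
  have hpt : ∀ x : ℝ, (gammaPDF ap lp * fun x => gammaMeasure am lm (Prod.mk x ⁻¹' S)) x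
      = ∫⁻ y, gammaPDF ap lp x
          * (A.indicator (fun _ => (1:ℝ≥0∞)) (x - y) * gammaPDF am lm y) := by
    intro x
    have hsm : MeasurableSet (Prod.mk x ⁻¹' S) := measurable_prodMk_left hSm
    simp only [Pi.mul_apply]
    rw [show gammaMeasure am lm = volume.withDensity (gammaPDF am lm) from rfl,
      withDensity_apply _ hsm, ← lintegral_indicator hsm _,
      ← lintegral_const_mul' (gammaPDF ap lp x) _ ENNReal.ofReal_ne_top]
    refine lintegral_congr fun y => ?_
    by_cases hy : x - y ∈ A
    · have hmem : y ∈ Prod.mk x ⁻¹' S := by simpa [hSdef] using hy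
      simp [Set.indicator_of_mem hmem, Set.indicator_of_mem hy]
    · have hmem : y ∉ Prod.mk x ⁻¹' S := by simpa [hSdef] using hy
      simp [Set.indicator_of_notMem hmem, Set.indicator_of_notMem hy]
  simp_rw [hpt]
  have hmF : Measurable fun p : ℝ × ℝ => gammaPDF ap lp p.1
      * (A.indicator (fun _ => (1:ℝ≥0∞)) (p.1 - p.2) * gammaPDF am lm p.2) :=
    (hg.comp measurable_fst).mul
      (((measurable_const.indicator hA).comp hT).mul (hh.comp measurable_snd))
  rw [lintegral_lintegral_swap hmF.aemeasurable]
  have hshift : ∀ y : ℝ, (∫⁻ x, gammaPDF ap lp x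
        * (A.indicator (fun _ => (1:ℝ≥0∞)) (x - y) * gammaPDF am lm y))
      = ∫⁻ s, gammaPDF ap lp (s + y)
        * (A.indicator (fun _ => (1:ℝ≥0∞)) s * gammaPDF am lm y) := by
    intro y
    rw [← lintegral_add_right_eq_self (fun x => gammaPDF ap lp x
      * (A.indicator (fun _ => (1:ℝ≥0∞)) (x - y) * gammaPDF am lm y)) y]
    simp [add_sub_cancel_right]
  simp_rw [hshift]
  have hmF2 : Measurable fun p : ℝ × ℝ => gammaPDF ap lp (p.2 + p.1)
      * (A.indicator (fun _ => (1:ℝ≥0∞)) p.2 * gammaPDF am lm p.1) :=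
    (hg.comp (measurable_snd.add measurable_fst)).mul
      (((measurable_const.indicator hA).comp measurable_snd).mul (hh.comp measurable_fst))
  rw [lintegral_lintegral_swap hmF2.aemeasurable]
  rw [← lintegral_indicator hA _]
  refine lintegral_congr fun s => ?_
  have hne : A.indicator (fun _ => (1:ℝ≥0∞)) s ≠ ⊤ := by
    by_cases h : s ∈ A <;> simp [h]
  calc (∫⁻ y, gammaPDF ap lp (s + y)
        * (A.indicator (fun _ => (1:ℝ≥0∞)) s * gammaPDF am lm y))
      = ∫⁻ y, A.indicator (fun _ => (1:ℝ≥0∞)) s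
          * (gammaPDF ap lp (s + y) * gammaPDF am lm y) := by
        refine lintegral_congr fun y => ?_; ring
    _ = A.indicator (fun _ => (1:ℝ≥0∞)) s
          * ∫⁻ y, gammaPDF ap lp (s + y) * gammaPDF am lm y :=
        lintegral_const_mul' _ _ hne
    _ = A.indicator (fun s => ∫⁻ y, gammaPDF ap lp (s + y) * gammaPDF am lm y) s := by
        by_cases h : s ∈ A <;> simp [h]

/-- the bilateral Gamma distribution is absolutely continuous with respect to
Lebesgue measure, with the convolution density: for `x > 0`,
`f(x) = (λ⁺)^{α⁺}(λ⁻)^{α⁻}/((λ⁺+λ⁻)^{α⁻}Γ(α⁺)Γ(α⁻)) e^{−λ⁺x}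
  ∫₀^∞ v^{α⁻−1}(x+v/(λ⁺+λ⁻))^{α⁺−1}e^{−v} dv`,
and for `x < 0` the symmetric expression with `(α⁺,λ⁺)` and `(α⁻,λ⁻)` interchanged and `x`
replaced by `|x|`. -/
theorem bilateralGamma_density (ap lp am lm : ℝ)
    (hap : 0 < ap) (hlp : 0 < lp) (ham : 0 < am) (hlm : 0 < lm) :
    bilateralGammaMeasure ap lp am lm
      = volume.withDensity (fun x : ℝ => ENNReal.ofReal (
          if 0 < x then
            lp ^ ap * lm ^ am / ((lp + lm) ^ am * Real.Gamma ap * Real.Gamma am)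
              * Real.exp (-lp * x)
              * ∫ v in Set.Ioi (0 : ℝ),
                  v ^ (am - 1) * (x + v / (lp + lm)) ^ (ap - 1) * Real.exp (-v)
          else if x < 0 then
            lm ^ am * lp ^ ap / ((lp + lm) ^ ap * Real.Gamma am * Real.Gamma ap)
              * Real.exp (-lm * |x|)
              * ∫ v in Set.Ioi (0 : ℝ),
                  v ^ (ap - 1) * (|x| + v / (lp + lm)) ^ (am - 1) * Real.exp (-v)
          else 0)) := by
  have hg : Measurable (gammaPDF ap lp) := (measurable_gammaPDFReal ap lp).ennreal_ofReal
  have hh : Measurable (gammaPDF am lm) := (measurable_gammaPDFReal am lm).ennreal_ofReal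
  have ipp : IsProbabilityMeasure (gammaMeasure ap lp) := isProbabilityMeasure_gammaMeasure hap hlp
  have ipm : IsProbabilityMeasure (gammaMeasure am lm) := isProbabilityMeasure_gammaMeasure ham hlm
  refine (bilateral_eq ap lp am lm hap hlp ham hlm).trans (withDensity_congr_ae ?_)
  have hmK : Measurable fun s : ℝ => ∫⁻ y, gammaPDF ap lp (s + y) * gammaPDF am lm y :=
    Measurable.lintegral_prod_right'
      ((hg.comp (measurable_fst.add measurable_snd)).mul (hh.comp measurable_snd))
  have htot : (∫⁻ s, ∫⁻ y, gammaPDF ap lp (s + y) * gammaPDF am lm y) ≠ ⊤ := by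
    have hp : IsProbabilityMeasure (bilateralGammaMeasure ap lp am lm) := by
      rw [bilateralGammaMeasure]
      exact Measure.isProbabilityMeasure_map (measurable_fst.sub measurable_snd).aemeasurable
    have h1 : volume.withDensity (fun s => ∫⁻ y, gammaPDF ap lp (s + y) * gammaPDF am lm y)
        Set.univ = 1 := by
      rw [← bilateral_eq ap lp am lm hap hlp ham hlm]
      exact measure_univ
    rw [withDensity_apply _ MeasurableSet.univ, Measure.restrict_univ] at h1
    rw [h1]
    exact ENNReal.one_ne_top
  have hKfin := ae_lt_top hmK htot
  have hne0 : ∀ᵐ s : ℝ ∂volume, s ≠ 0 := by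
    rw [ae_iff]
    simp only [ne_eq, not_not, Set.setOf_eq_eq_singleton]
    exact Real.volume_singleton
  filter_upwards [hKfin, hne0] with s hfin hs0
  rcases lt_trichotomy 0 s with hs | hs | hs
  · rw [if_pos hs]
    exact gamma_conv_key ap lp am lm s hap hlp ham hlm hs hfin.ne
  · exact absurd hs.symm hs0
  · rw [if_neg (by linarith), if_pos hs, abs_of_neg hs]
    have hswap : (∫⁻ y, gammaPDF ap lp (s + y) * gammaPDF am lm y)
        = ∫⁻ u, gammaPDF am lm (-s + u) * gammaPDF ap lp u := by
      rw [← lintegral_add_right_eq_self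
        (fun y => gammaPDF ap lp (s + y) * gammaPDF am lm y) (-s)]
      refine lintegral_congr fun u => ?_
      rw [show s + (u + -s) = u by ring, show u + -s = -s + u by ring, mul_comm]
    have hfin' : (∫⁻ u, gammaPDF am lm (-s + u) * gammaPDF ap lp u) ≠ ⊤ :=
      hswap ▸ hfin.ne
    rw [hswap, gamma_conv_key am lm ap lp (-s) ham hlm hap hlp (by linarith) hfin',
      add_comm lm lp]
end

section
/- Let α⁺, α⁻ > 0 and for λ > 1 define φ(λ) := ( (λ/(λ−1))^{α⁺/α⁻} − 1 )^{−1}. Then φ(λ) > 0 and (λ/(λ−1))^{α⁺} = ((φ(λ) + 1)/φ(λ))^{α⁻}; consequently, if Z ~ Γ(α⁺, λ; α⁻, φ(λ)), then E[e^{Z}] = 1, so every bilateral Gamma distribution Γ(α⁺,λ;α⁻,φ(λ)) with λ > 1 satisfies the martingale condition of the exponential stock model. -/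
open MeasureTheory ProbabilityTheory

lemma gammaPDF_mul_exp (a r t : ℝ) (ha : 0 < a) (hr : 0 < r) (ht : t < r) (x : ℝ) :
    gammaPDF a r x * ENNReal.ofReal (Real.exp (t * x))
      = ENNReal.ofReal ((r / (r - t)) ^ a) * gammaPDF a (r - t) x := by
  have hrt : 0 < r - t := by linarith
  rcases lt_or_ge x 0 with hx | hx
  · rw [gammaPDF_of_neg hx, gammaPDF_of_neg hx, zero_mul, mul_zero]
  · rw [gammaPDF_of_nonneg hx, gammaPDF_of_nonneg hx,
      ← ENNReal.ofReal_mul (by positivity), ← ENNReal.ofReal_mul (by positivity)]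
    congr 1
    rw [Real.div_rpow hr.le hrt.le]
    have hG : Real.Gamma a ≠ 0 := (Real.Gamma_pos_of_pos ha).ne'
    have h1 : Real.exp (-(r * x)) * Real.exp (t * x) = Real.exp (-((r - t) * x)) := by
      rw [← Real.exp_add]; ring_nf
    have h2 : (r - t) ^ a ≠ 0 := (Real.rpow_pos_of_pos hrt a).ne'
    rw [mul_assoc, h1]
    field_simp

lemma gamma_exp_lintegral {a r t : ℝ} (ha : 0 < a) (hr : 0 < r) (ht : t < r) :
    ∫⁻ x, ENNReal.ofReal (Real.exp (t * x)) ∂(gammaMeasure a r)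
      = ENNReal.ofReal ((r / (r - t)) ^ a) := by
  have hrt : 0 < r - t := by linarith
  rw [gammaMeasure, show gammaPDF a r = fun x => ENNReal.ofReal (gammaPDFReal a r x) from rfl,
    lintegral_withDensity_eq_lintegral_mul _
    (measurable_gammaPDFReal a r).ennreal_ofReal
    (show Measurable fun x : ℝ => ENNReal.ofReal (Real.exp (t * x)) by fun_prop)]
  calc ∫⁻ x, ((fun x => ENNReal.ofReal (gammaPDFReal a r x)) * fun x => ENNReal.ofReal (Real.exp (t * x))) x
      = ∫⁻ x, ENNReal.ofReal ((r / (r - t)) ^ a) * gammaPDF a (r - t) x := by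
        refine lintegral_congr fun x => ?_
        exact gammaPDF_mul_exp a r t ha hr ht x
    _ = ENNReal.ofReal ((r / (r - t)) ^ a) := by
        rw [lintegral_const_mul _ (show Measurable fun x : ℝ => gammaPDF a (r - t) x from
            (measurable_gammaPDFReal a (r - t)).ennreal_ofReal),
          lintegral_gammaPDF_eq_one ha hrt, mul_one]

/-- for `α⁺, α⁻ > 0` and `λ > 1`, with
`φ(λ) = ((λ/(λ−1))^{α⁺/α⁻} − 1)⁻¹` one has `φ(λ) > 0`,
`(λ/(λ−1))^{α⁺} = ((φ(λ)+1)/φ(λ))^{α⁻}`, and the bilateral Gamma distribution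
`Γ(α⁺,λ;α⁻,φ(λ))` satisfies the martingale condition `E[e^Z] = 1` of the exponential stock
model. -/
theorem bilateralGamma_emm (ap am lam φ : ℝ) (hap : 0 < ap) (ham : 0 < am) (hlam : 1 < lam)
    (hφ : φ = ((lam / (lam - 1)) ^ (ap / am) - 1)⁻¹) :
    0 < φ
      ∧ (lam / (lam - 1)) ^ ap = ((φ + 1) / φ) ^ am
      ∧ (∫ x, Real.exp x ∂(bilateralGammaMeasure ap lam am φ)) = 1 := by
  have hl1 : 0 < lam - 1 := by linarith
  have hbase : 1 < lam / (lam - 1) := by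
    rw [lt_div_iff₀ hl1]; linarith
  set u : ℝ := (lam / (lam - 1)) ^ (ap / am) with hu
  have hu1 : 1 < u := Real.one_lt_rpow_iff_of_pos (by linarith) |>.mpr
    (Or.inl ⟨hbase, by positivity⟩)
  have hφpos : 0 < φ := by rw [hφ]; exact inv_pos.mpr (by linarith)
  have hkey : (φ + 1) / φ = u := by
    rw [hφ]
    have h : u - 1 ≠ 0 := by linarith
    field_simp
    ring
  have heq : (lam / (lam - 1)) ^ ap = ((φ + 1) / φ) ^ am := by
    rw [hkey, hu, ← Real.rpow_mul (by positivity), div_mul_cancel₀ _ ham.ne']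
  refine ⟨hφpos, heq, ?_⟩
  -- the integral
  have hprobp : IsProbabilityMeasure (gammaMeasure ap lam) :=
    isProbabilityMeasure_gammaMeasure hap (by linarith)
  have hprobm : IsProbabilityMeasure (gammaMeasure am φ) :=
    isProbabilityMeasure_gammaMeasure ham hφpos
  have hmeas : Measurable (fun p : ℝ × ℝ => p.1 - p.2) := measurable_fst.sub measurable_snd
  have hlin : ∫⁻ x, ENNReal.ofReal (Real.exp x) ∂(bilateralGammaMeasure ap lam am φ) = 1 := by
    rw [bilateralGammaMeasure, lintegral_map Real.measurable_exp.ennreal_ofReal hmeas,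
      lintegral_prod]
    swap
    · exact (Real.measurable_exp.comp hmeas).ennreal_ofReal.aemeasurable
    have hinner : ∀ x : ℝ, ∫⁻ y, ENNReal.ofReal (Real.exp (x - y)) ∂(gammaMeasure am φ)
        = ENNReal.ofReal (Real.exp x) * ENNReal.ofReal ((φ / (φ + 1)) ^ am) := by
      intro x
      have : ∀ y : ℝ, ENNReal.ofReal (Real.exp (x - y))
          = ENNReal.ofReal (Real.exp x) * ENNReal.ofReal (Real.exp ((-1) * y)) := by
        intro y
        rw [← ENNReal.ofReal_mul (Real.exp_nonneg x), ← Real.exp_add]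
        ring_nf
      simp_rw [this]
      rw [lintegral_const_mul _
        (show Measurable fun y : ℝ => ENNReal.ofReal (Real.exp (-1 * y)) by fun_prop),
        gamma_exp_lintegral ham hφpos (by linarith)]
      norm_num
    simp_rw [hinner]
    rw [lintegral_mul_const _ Real.measurable_exp.ennreal_ofReal]
    have := gamma_exp_lintegral hap (show (0:ℝ) < lam by linarith) (show (1:ℝ) < lam from hlam)
    simp_rw [one_mul] at this
    rw [this, ← ENNReal.ofReal_mul (by positivity)]
    have : (lam / (lam - 1)) ^ ap * (φ / (φ + 1)) ^ am = 1 := by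
      rw [heq, ← Real.mul_rpow (by positivity) (by positivity),
        div_mul_div_comm]
      rw [mul_comm (φ + 1) φ, div_self (by positivity), Real.one_rpow]
    rw [this, ENNReal.ofReal_one]
  rw [integral_eq_lintegral_of_nonneg_ae (ae_of_all _ fun x => (Real.exp_nonneg x))
    Real.continuous_exp.aestronglyMeasurable, hlin, ENNReal.toReal_one]
end
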